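/- arXiv:1602.03575 — 2 statements merged into one kernel-verified Lean document; each statement's English description precedes it below -/
import Mathlib

section
/- Let T be a simplicial tree, G ≤ Aut(T) and k ∈ ℕ. Then the k-closure G^(k) satisfies Property P_k. -/
/-!
STATEMENT 16.  For a simplicial tree T, G ≤ Aut(T) and k ∈ ℕ, the k-closure G^(k)
satisfies Property P_k.
-/

def IsTreeAut {V : Type*} (T : SimpleGraph V) (g : Equiv.Perm V) : Prop :=
  ∀ u v : V, T.Adj (g u) (g v) ↔ T.Adj u v

def IsConvex {V : Type*} (T : SimpleGraph V) (X : Set V) : Prop :=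
  ∀ u ∈ X, ∀ v ∈ X, ∀ p : T.Walk u v, p.IsPath → ∀ w ∈ p.support, w ∈ X

/-- A path in the tree: a nonempty convex set of vertices in which every vertex has at
most two neighbours.  This covers finite, one-sided infinite and bi-infinite paths. -/
def IsPathSet {V : Type*} (T : SimpleGraph V) (C : Set V) : Prop :=
  C.Nonempty ∧ IsConvex T C ∧
    ∀ x ∈ C, ∀ w₁ ∈ C, ∀ w₂ ∈ C, ∀ w₃ ∈ C,
      T.Adj x w₁ → T.Adj x w₂ → T.Adj x w₃ → (w₁ = w₂ ∨ w₁ = w₃ ∨ w₂ = w₃)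

/-- The m-neighbourhood Cᵐ of a set of vertices: all vertices at distance at most m. -/
def nbhd {V : Type*} (T : SimpleGraph V) (C : Set V) (m : ℕ) : Set V :=
  {v | ∃ c ∈ C, T.dist v c ≤ m}

/-- T_x = π_C⁻¹(x): the vertices whose nearest point of C is x. -/
def projSet {V : Type*} (T : SimpleGraph V) (C : Set V) (x : V) : Set V :=
  {v | ∀ c ∈ C, T.dist v x ≤ T.dist v c}

/-- Property P_k for a set S of automorphisms: for every path C, the natural injective
homomorphism from the pointwise stabilizer of C^{k-1} in S to the product over x ∈ C of
the permutation groups induced on the subtrees T_x is an isomorphism (injectivity and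
surjectivity clauses). -/
def PropertyPk {V : Type*} (T : SimpleGraph V) (S : Set (Equiv.Perm V)) (k : ℕ) : Prop :=
  ∀ C : Set V, IsPathSet T C →
    ((∀ g ∈ S, (∀ v ∈ nbhd T C (k-1), g v = v) →
        (∀ x ∈ C, ∀ v ∈ projSet T C x, g v = v) → g = 1) ∧
     (∀ h : V → Equiv.Perm V,
        (∀ x ∈ C, h x ∈ S ∧ ∀ v ∈ nbhd T C (k-1), (h x) v = v) →
        ∃ g ∈ S, (∀ v ∈ nbhd T C (k-1), g v = v) ∧
          ∀ x ∈ C, ∀ v ∈ projSet T C x, g v = (h x) v))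

/-- The k-closure of a set S of automorphisms of T: the automorphisms which agree on
every ball of radius k with some element of S. -/
def kClosure {V : Type*} (T : SimpleGraph V) (S : Set (Equiv.Perm V)) (k : ℕ) :
    Set (Equiv.Perm V) :=
  {h : Equiv.Perm V | IsTreeAut T h ∧
    ∀ x : V, ∃ g ∈ S, ∀ v : V, T.dist x v ≤ k → h v = g v}

/-- The topology of pointwise convergence on vertices (vertices being discrete). -/
def permTop (V : Type*) : TopologicalSpace (Equiv.Perm V) :=
  TopologicalSpace.induced (fun g : Equiv.Perm V => (g : V → V))
    (@Pi.topologicalSpace V (fun _ => V) (fun _ => ⊥))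

section TreeAux
open SimpleGraph
variable {V : Type*} {T : SimpleGraph V}

/-- In a tree, every path realizes the distance between its endpoints. -/
lemma tree_path_length (hT : T.IsTree) {u v : V} (p : T.Walk u v) (hp : p.IsPath) :
    p.length = T.dist u v := by
  obtain ⟨q, hq, hlen⟩ := hT.isConnected.exists_path_of_dist u v
  rw [(hT.existsUnique_path u v).unique hp hq, hlen]

/-- Splitting a path at a vertex on it gives an exact distance decomposition. -/
lemma dist_add_of_mem_support (hT : T.IsTree) {u v z : V} (p : T.Walk u v) (hp : p.IsPath)
    (hz : z ∈ p.support) : T.dist u z + T.dist z v = T.dist u v := by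
  classical
  rw [← tree_path_length hT p hp, ← tree_path_length hT _ (hp.takeUntil hz),
    ← tree_path_length hT _ (hp.dropUntil hz), ← Walk.length_append, p.take_spec hz]

/-- Appending paths which share only the middle vertex yields an exact distance sum. -/
lemma dist_eq_add_of_disjoint (hT : T.IsTree) {u x w : V} (p : T.Walk u x) (q : T.Walk x w)
    (hp : p.IsPath) (hq : q.IsPath)
    (hd : ∀ z, z ∈ p.support → z ∈ q.support → z = x) :
    T.dist u w = T.dist u x + T.dist x w := by
  have hpath : (p.append q).IsPath := by
    rw [Walk.isPath_def, Walk.support_append, List.nodup_append]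
    refine ⟨hp.support_nodup, hq.support_nodup.tail, ?_⟩
    intro z hz1 b hz2 hzb
    subst hzb
    have hz2' : z ∈ q.support := List.tail_subset _ hz2
    have := hd z hz1 hz2'
    subst this
    have := hq.support_nodup
    rw [q.support_eq_cons] at this
    exact (List.nodup_cons.mp this).1 hz2
  rw [← tree_path_length hT _ hpath, Walk.length_append,
    tree_path_length hT p hp, tree_path_length hT q hq]

/-- Existence of a gate (nearest-point projection) to a nonempty convex set in a tree. -/
lemma exists_gate (hT : T.IsTree) {C : Set V} (hne : C.Nonempty) (hconv : IsConvex T C)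
    (v : V) : ∃ x ∈ C, ∀ c ∈ C, T.dist v c = T.dist v x + T.dist x c := by
  obtain ⟨c₀, hc₀⟩ := hne
  have hSne : (T.dist v c₀) ∈ {n | ∃ c ∈ C, T.dist v c = n} := ⟨c₀, hc₀, rfl⟩
  obtain ⟨x, hxC, hxmin⟩ : ∃ x ∈ C, ∀ c ∈ C, T.dist v x ≤ T.dist v c := by
    obtain ⟨x, hxC, hx⟩ := Nat.sInf_mem ⟨_, hSne⟩
    exact ⟨x, hxC, fun c hc => hx ▸ Nat.sInf_le ⟨c, hc, rfl⟩⟩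
  refine ⟨x, hxC, fun c hc => ?_⟩
  obtain ⟨p, hp, -⟩ := hT.isConnected.exists_path_of_dist v x
  obtain ⟨q, hq, -⟩ := hT.isConnected.exists_path_of_dist x c
  refine dist_eq_add_of_disjoint hT p q hp hq (fun z hzp hzq => ?_)
  have hzC : z ∈ C := hconv x hxC c hc q hq z hzq
  have h1 := dist_add_of_mem_support hT p hp hzp
  have h2 := hxmin z hzC
  have h3 : T.dist z x = 0 := by omega
  exact ((hT.isConnected.dist_eq_zero_iff).mp h3)

/-- Uniqueness of the gate. -/
lemma gate_unique (hT : T.IsTree) {C : Set V} {v x y : V} (hx : x ∈ C) (hy : y ∈ C)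
    (hgx : ∀ c ∈ C, T.dist v c = T.dist v x + T.dist x c)
    (hgy : ∀ c ∈ C, T.dist v c = T.dist v y + T.dist y c) : x = y := by
  have h1 := hgx y hy
  have h2 := hgy x hx
  have h3 : T.dist x y = T.dist y x := T.dist_comm
  have : T.dist x y = 0 := by omega
  exact (hT.isConnected.dist_eq_zero_iff).mp this

/-- Separation lemma: if `u` has gate `x` and `w` has gate `y ≠ x`, the geodesic from
`u` to `w` passes through `x` and `y`. -/
lemma gate_separation (hT : T.IsTree) {C : Set V} (hconv : IsConvex T C)
    {u w x y : V} (hx : x ∈ C) (hy : y ∈ C) (hxy : x ≠ y)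
    (hgu : ∀ c ∈ C, T.dist u c = T.dist u x + T.dist x c)
    (hgw : ∀ c ∈ C, T.dist w c = T.dist w y + T.dist y c) :
    T.dist u w = T.dist u x + T.dist x y + T.dist y w := by
  obtain ⟨p, hp, -⟩ := hT.isConnected.exists_path_of_dist u x
  obtain ⟨q, hq, -⟩ := hT.isConnected.exists_path_of_dist x y
  obtain ⟨r, hr, -⟩ := hT.isConnected.exists_path_of_dist y w
  have hqC : ∀ z ∈ q.support, z ∈ C := fun z hz => hconv x hx y hy q hq z hz
  have hpC : ∀ z ∈ p.support, z ∈ C → z = x := by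
    intro z hz hzC
    have h1 := dist_add_of_mem_support hT p hp hz
    have h2 := hgu z hzC
    have h3 : T.dist x z = T.dist z x := T.dist_comm
    have : T.dist z x = 0 := by omega
    exact (hT.isConnected.dist_eq_zero_iff).mp this
  have hrC : ∀ z ∈ r.support, z ∈ C → z = y := by
    intro z hz hzC
    have h1 := dist_add_of_mem_support hT r hr hz
    have h2 := hgw z hzC
    have h3 : T.dist y z = T.dist z y := T.dist_comm
    have h4 : T.dist z w = T.dist w z := T.dist_comm
    have h5 : T.dist y w = T.dist w y := T.dist_comm
    have : T.dist y z = 0 := by omega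
    exact ((hT.isConnected.dist_eq_zero_iff).mp this).symm
  have hdist_xy : T.dist x y ≠ 0 := fun h0 => hxy ((hT.isConnected.dist_eq_zero_iff).mp h0)
  have hpq : ∀ z, z ∈ p.support → z ∈ q.support → z = x := fun z hzp hzq =>
    hpC z hzp (hqC z hzq)
  have hs : T.dist u y = T.dist u x + T.dist x y := dist_eq_add_of_disjoint hT p q hp hq hpq
  -- build the path from u to y
  have hspath : (p.append q).IsPath := by
    rw [Walk.isPath_def, Walk.support_append, List.nodup_append]
    refine ⟨hp.support_nodup, hq.support_nodup.tail, ?_⟩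
    intro z hz1 b hz2 hzb
    subst hzb
    have hz2' : z ∈ q.support := List.tail_subset _ hz2
    have := hpq z hz1 hz2'
    subst this
    have := hq.support_nodup
    rw [q.support_eq_cons] at this
    exact (List.nodup_cons.mp this).1 hz2
  have hfinal : T.dist u w = T.dist u y + T.dist y w := by
    refine dist_eq_add_of_disjoint hT (p.append q) r hspath hr (fun z hz hzr => ?_)
    rw [Walk.mem_support_append_iff] at hz
    rcases hz with hzp | hzq
    · by_cases hzC : z ∈ C
      · exact absurd ((hpC z hzp hzC) ▸ hrC z hzr hzC) hxy
      · exfalso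
        have h1 := dist_add_of_mem_support hT p hp hzp
        have h2 := dist_add_of_mem_support hT r hr hzr
        have h3 := hgu y hy
        have h4 := hgw x hx
        have t1 : T.dist u y ≤ T.dist u z + T.dist z y := hT.isConnected.dist_triangle
        have t2 : T.dist w x ≤ T.dist w z + T.dist z x := hT.isConnected.dist_triangle
        have c1 : T.dist z w = T.dist w z := T.dist_comm
        have c2 : T.dist y x = T.dist x y := T.dist_comm
        have c3 : T.dist z y = T.dist y z := T.dist_comm
        have c4 : T.dist y w = T.dist w y := T.dist_comm
        omega
    · exact hrC z hzr (hqC z hzq)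
  rw [hfinal, hs]

lemma isTreeAut_inv {g : Equiv.Perm V} (hg : IsTreeAut T g) : IsTreeAut T g⁻¹ := by
  intro u v
  have := hg (g⁻¹ u) (g⁻¹ v)
  simpa using this.symm

lemma isTreeAut_dist_le (hg : IsTreeAut T (g : Equiv.Perm V)) (hconn : T.Connected) (u v : V) :
    T.dist (g u) (g v) ≤ T.dist u v := by
  obtain ⟨p, hp⟩ := hconn.exists_walk_length_eq_dist u v
  have hle := SimpleGraph.dist_le (p.map ⟨(g : V → V), fun {a b} hab => (hg a b).mpr hab⟩)
  rwa [Walk.length_map, hp] at hle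

lemma isTreeAut_dist {g : Equiv.Perm V} (hg : IsTreeAut T g) (hconn : T.Connected) (u v : V) :
    T.dist (g u) (g v) = T.dist u v := by
  refine le_antisymm (isTreeAut_dist_le hg hconn u v) ?_
  have := isTreeAut_dist_le (isTreeAut_inv hg) hconn (g u) (g v)
  simpa using this

lemma perm_inv_fix {g : Equiv.Perm V} {c : V} (h : g c = c) : g⁻¹ c = c := by
  conv_lhs => rw [← h]
  exact Equiv.symm_apply_apply g c

end TreeAux

theorem kClosure_satisfies_PropertyPk {V : Type*} [Countable V]
    (T : SimpleGraph V) (hT : T.IsTree)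
    (G : Subgroup (Equiv.Perm V)) (hG : ∀ g ∈ G, IsTreeAut T g) (k : ℕ) (hk : 1 ≤ k) :
    PropertyPk T (kClosure T (G : Set (Equiv.Perm V)) k) k := by
  classical
  intro C hC
  obtain ⟨hne, hconv, -⟩ := hC
  have hconn := hT.isConnected
  choose px hpxC hpx using fun v => exists_gate hT hne hconv v
  have hpx_eq : ∀ (v x : V), x ∈ C → (∀ c ∈ C, T.dist v c = T.dist v x + T.dist x c) →
      x = px v := fun v x hx hgx => gate_unique hT hx (hpxC v) hgx (hpx v)
  have hproj_gate : ∀ x ∈ C, ∀ v ∈ projSet T C x, x = px v := by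
    intro x hx v hv
    have h2 := hpx v x hx
    have h3 := hv (px v) (hpxC v)
    have h0 : T.dist (px v) x = 0 := by omega
    exact ((hconn.dist_eq_zero_iff).mp h0).symm
  have hmemproj : ∀ v, v ∈ projSet T C (px v) := by
    intro v c hc
    rw [hpx v c hc]
    exact Nat.le_add_right _ _
  constructor
  · -- injectivity
    intro g _ _ hproj
    ext v
    exact hproj (px v) (hpxC v) v (hmemproj v)
  · -- surjectivity
    intro h hh
    have haut : ∀ x ∈ C, IsTreeAut T (h x) := fun x hx => (hh x hx).1.1
    have hfixnb : ∀ x ∈ C, ∀ v ∈ nbhd T C (k-1), (h x) v = v := fun x hx => (hh x hx).2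
    have hfixC : ∀ x ∈ C, ∀ c ∈ C, (h x) c = c := by
      intro x hx c hc
      exact hfixnb x hx c ⟨c, hc, by rw [SimpleGraph.dist_self]; exact Nat.zero_le _⟩
    have hpx_inv : ∀ (e : Equiv.Perm V), IsTreeAut T e → (∀ c ∈ C, e c = c) →
        ∀ v, px (e v) = px v := by
      intro e he hefix v
      refine (hpx_eq (e v) (px v) (hpxC v) (fun c hc => ?_)).symm
      have h1 : T.dist (e v) c = T.dist v c := by
        conv_lhs => rw [← hefix c hc]
        exact isTreeAut_dist he hconn v c
      have h2 : T.dist (e v) (px v) = T.dist v (px v) := by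
        conv_lhs => rw [← hefix (px v) (hpxC v)]
        exact isTreeAut_dist he hconn v (px v)
      rw [h1, h2]
      exact hpx v c hc
    have key : ∀ (f : V → Equiv.Perm V), (∀ x ∈ C, IsTreeAut T (f x)) →
        (∀ x ∈ C, ∀ c ∈ C, (f x) c = c) → ∀ u v, T.Adj u v →
        T.Adj ((f (px u)) u) ((f (px v)) v) := by
      intro f hfaut hffix u v huv
      by_cases hxy : px u = px v
      · rw [hxy]
        exact (hfaut (px v) (hpxC v) _ _).mpr huv
      · have hd1 : T.dist u v = 1 := SimpleGraph.dist_eq_one_iff_adj.mpr huv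
        have hsep := gate_separation hT hconv (hpxC u) (hpxC v) hxy (hpx u) (hpx v)
        have hd2 : T.dist (px u) (px v) ≠ 0 := fun h0 => hxy (hconn.dist_eq_zero_iff.mp h0)
        have hu0 : T.dist u (px u) = 0 := by omega
        have hv0 : T.dist (px v) v = 0 := by omega
        have hu' : u = px u := hconn.dist_eq_zero_iff.mp hu0
        have hv' : px v = v := hconn.dist_eq_zero_iff.mp hv0
        have huC : u ∈ C := by rw [hu']; exact hpxC u
        have hvC : v ∈ C := by rw [← hv']; exact hpxC v
        rw [hffix (px u) (hpxC u) u huC, hffix (px v) (hpxC v) v hvC]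
        exact huv
    have hg_left : ∀ v, (h (px ((h (px v)) v)))⁻¹ ((h (px v)) v) = v := by
      intro v
      rw [hpx_inv (h (px v)) (haut _ (hpxC v)) (hfixC _ (hpxC v)) v]
      exact Equiv.symm_apply_apply (h (px v)) v
    have hg_right : ∀ v, (h (px ((h (px v))⁻¹ v))) ((h (px v))⁻¹ v) = v := by
      intro v
      rw [hpx_inv ((h (px v))⁻¹) (isTreeAut_inv (haut _ (hpxC v)))
        (fun c hc => perm_inv_fix (hfixC _ (hpxC v) c hc)) v]
      exact Equiv.apply_symm_apply (h (px v)) v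
    let g : Equiv.Perm V :=
      { toFun := fun v => (h (px v)) v
        invFun := fun v => (h (px v))⁻¹ v
        left_inv := fun v => hg_left v
        right_inv := fun v => hg_right v }
    have hgapp : ∀ v, g v = (h (px v)) v := fun v => rfl
    have hgaut : IsTreeAut T g := by
      intro u v
      constructor
      · intro hadj
        have := key (fun x => (h x)⁻¹) (fun x hx => isTreeAut_inv (haut x hx))
          (fun x hx c hc => perm_inv_fix (hfixC x hx c hc)) (g u) (g v) hadj
        rw [hgapp u, hgapp v] at this
        rwa [hg_left u, hg_left v] at this
      · intro hadj
        rw [hgapp u, hgapp v]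
        exact key h haut hfixC u v hadj
    refine ⟨g, ⟨hgaut, ?_⟩, ?_, ?_⟩
    · -- local agreement with elements of G
      intro x₀
      obtain ⟨g', hg'G, hg'⟩ := (hh (px x₀) (hpxC x₀)).1.2 x₀
      refine ⟨g', hg'G, fun v hv => ?_⟩
      rw [← hg' v hv]
      by_cases hx : px v = px x₀
      · rw [hgapp, hx]
      · have hsep := gate_separation hT hconv (hpxC x₀) (hpxC v) (Ne.symm hx)
          (hpx x₀) (hpx v)
        have hd2 : T.dist (px x₀) (px v) ≠ 0 :=
          fun h0 => hx ((hconn.dist_eq_zero_iff.mp h0)).symm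
        have hnb : v ∈ nbhd T C (k-1) := by
          refine ⟨px v, hpxC v, ?_⟩
          have hcomm : T.dist (px v) v = T.dist v (px v) := T.dist_comm
          omega
        rw [hgapp, hfixnb (px v) (hpxC v) v hnb, hfixnb (px x₀) (hpxC x₀) v hnb]
    · -- fixes the (k-1)-neighbourhood
      intro v hv
      rw [hgapp]
      exact hfixnb (px v) (hpxC v) v hv
    · -- agrees with the given family on each fibre
      intro x hx v hv
      rw [hgapp, ← hproj_gate x hx v hv]
end

section
/- Let T be a simplicial tree (not a bi-infinite line) and suppose G ≤ Aut(T) is geometrically dense. Then for all natural numbers r ≥ k one has (G^(r))^{+_r} ≤ (G^(k))^{+_k}, and equality (G^(r))^{+_r} = (G^(k))^{+_k} holds if and only if G^(r) = G^(k). -/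
def NotLine {V : Type*} (T : SimpleGraph V) : Prop :=
  ¬ ∀ v : V, (T.neighborSet v).ncard = 2

def IsRay {V : Type*} (T : SimpleGraph V) (r : ℕ → V) : Prop :=
  (∀ n, T.Adj (r n) (r (n+1))) ∧ Function.Injective r

def RayEquiv {V : Type*} (r s : ℕ → V) : Prop :=
  ∃ m n : ℕ, ∀ i : ℕ, r (m + i) = s (n + i)

/-- Geometric density: no fixed end and no invariant proper nonempty subtree. -/
def GeomDense {V : Type*} (T : SimpleGraph V) (S : Set (Equiv.Perm V)) : Prop :=
  (¬ ∃ r : ℕ → V, IsRay T r ∧ ∀ g ∈ S, RayEquiv (fun n => g (r n)) r) ∧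
  ¬ ∃ Y : Set V, Y.Nonempty ∧ IsConvex T Y ∧ Y ≠ Set.univ ∧ ∀ g ∈ S, ∀ v ∈ Y, g v ∈ Y

/-- H^{+_k}: the subgroup generated by the pointwise stabilizers in a set S of
automorphisms of the (k-1)-neighbourhoods e^{k-1} of edges e. -/
def plusSubgroup {V : Type*} (T : SimpleGraph V) (S : Set (Equiv.Perm V)) (k : ℕ) :
    Subgroup (Equiv.Perm V) :=
  Subgroup.closure
    {g | g ∈ S ∧ ∃ u v : V, T.Adj u v ∧ ∀ w ∈ nbhd T ({u, v} : Set V) (k-1), g w = w}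

theorem Equiv.Perm.apply_inv_self {α : Type*} (f : Equiv.Perm α) (x : α) : f (f⁻¹ x) = x :=
  f.apply_symm_apply x

theorem Equiv.Perm.inv_apply_self {α : Type*} (f : Equiv.Perm α) (x : α) : f⁻¹ (f x) = x :=
  f.symm_apply_apply x

namespace Aux

open SimpleGraph

variable {V : Type*} {T : SimpleGraph V}

lemma isTreeAut_one : IsTreeAut T 1 := fun _ _ => Iff.rfl

lemma treeAut_mul {g h : Equiv.Perm V} (hg : IsTreeAut T g) (hh : IsTreeAut T h) :
    IsTreeAut T (g * h) := fun u v => by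
  simpa [Equiv.Perm.mul_apply] using (hg (h u) (h v)).trans (hh u v)

lemma treeAut_inv {g : Equiv.Perm V} (hg : IsTreeAut T g) : IsTreeAut T g⁻¹ := fun u v => by
  have := (hg (g⁻¹ u) (g⁻¹ v)).symm
  simpa using this

lemma treeAut_dist_le (hc : T.Connected) {g : Equiv.Perm V} (hg : IsTreeAut T g)
    (x y : V) : T.dist (g x) (g y) ≤ T.dist x y := by
  obtain ⟨w, hw⟩ := hc.exists_walk_length_eq_dist x y
  have h := SimpleGraph.dist_le (w.map ⟨(g : V → V), fun {a b} hab => (hg a b).mpr hab⟩)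
  simpa [SimpleGraph.Walk.length_map, hw] using h

lemma treeAut_dist (hc : T.Connected) {g : Equiv.Perm V} (hg : IsTreeAut T g)
    (x y : V) : T.dist (g x) (g y) = T.dist x y := by
  refine le_antisymm (treeAut_dist_le hc hg x y) ?_
  have := treeAut_dist_le hc (treeAut_inv hg) (g x) (g y)
  simpa using this

lemma exists_path_eq_dist (hc : T.Connected) (a b : V) :
    ∃ p : T.Walk a b, p.IsPath ∧ p.length = T.dist a b := by
  classical
  obtain ⟨w, hw⟩ := hc.exists_walk_length_eq_dist a b
  exact ⟨w.bypass, w.bypass_isPath,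
    le_antisymm (hw ▸ w.length_bypass_le) (SimpleGraph.dist_le _)⟩

lemma dist_ne_of_adj (hT : T.IsTree) {a b : V} (hab : T.Adj a b) (x : V) :
    T.dist x a ≠ T.dist x b := by
  classical
  intro heq
  obtain ⟨p, hp, hpl⟩ := exists_path_eq_dist hT.isConnected x a
  by_cases hb : b ∈ p.support
  · have h1 : T.dist x b ≤ (p.takeUntil b hb).length := SimpleGraph.dist_le _
    have h2 : (p.takeUntil b hb).length + (p.dropUntil b hb).length = p.length := by
      have h := congrArg SimpleGraph.Walk.length (p.take_spec hb)
      rwa [SimpleGraph.Walk.length_append] at h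
    have h3 : 1 ≤ (p.dropUntil b hb).length := by
      rcases Nat.eq_zero_or_pos (p.dropUntil b hb).length with h0 | h0
      · exact absurd (SimpleGraph.Walk.eq_of_length_eq_zero h0) hab.ne'
      · exact h0
    omega
  · have hq : (p.concat hab).IsPath := by
      rw [← SimpleGraph.Walk.isPath_reverse_iff, SimpleGraph.Walk.reverse_concat]
      exact hp.reverse.cons (by simpa [SimpleGraph.Walk.support_reverse] using hb)
    obtain ⟨q, hq', hql⟩ := exists_path_eq_dist hT.isConnected x b
    have huniq := hT.IsAcyclic.path_unique ⟨p.concat hab, hq⟩ ⟨q, hq'⟩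
    have hlen := congrArg SimpleGraph.Walk.length (congrArg Subtype.val huniq)
    simp only [SimpleGraph.Walk.length_concat] at hlen
    omega

lemma dist_adj_cases (hT : T.IsTree) {a b : V} (hab : T.Adj a b) (x : V) :
    T.dist x b = T.dist x a + 1 ∨ T.dist x a = T.dist x b + 1 := by
  have h1 : T.dist x b ≤ T.dist x a + 1 := by
    have := hT.isConnected.dist_triangle (u := x) (v := a) (w := b)
    simpa [SimpleGraph.dist_eq_one_iff_adj.mpr hab] using this
  have h2 : T.dist x a ≤ T.dist x b + 1 := by
    have := hT.isConnected.dist_triangle (u := x) (v := b) (w := a)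
    simpa [SimpleGraph.dist_eq_one_iff_adj.mpr hab.symm] using this
  have h3 := dist_ne_of_adj hT hab x
  omega

lemma exists_closer_neighbor (hc : T.Connected) {x u : V} (h : x ≠ u) :
    ∃ x', T.Adj x x' ∧ T.dist x u = T.dist x' u + 1 := by
  have hd : T.dist x u ≠ 0 := by
    rw [SimpleGraph.dist_ne_zero_iff_ne_and_reachable]
    exact ⟨h, hc.preconnected x u⟩
  obtain ⟨w, hw⟩ := hc.exists_walk_length_eq_dist x u
  cases w with
  | nil => simp only [SimpleGraph.Walk.length_nil] at hw; omega
  | @cons _ m _ hadj w' =>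
    refine ⟨m, hadj, ?_⟩
    have h1 : T.dist m u ≤ w'.length := SimpleGraph.dist_le _
    have h2 : T.dist x u ≤ T.dist x m + T.dist m u := hc.dist_triangle
    rw [SimpleGraph.dist_eq_one_iff_adj.mpr hadj] at h2
    simp only [SimpleGraph.Walk.length_cons] at hw
    omega

lemma crossing (hT : T.IsTree) {u v : V} (huv : T.Adj u v) {z z' : V} (hzz' : T.Adj z z')
    (hz : T.dist z u < T.dist z v) (hz' : T.dist z' v < T.dist z' u) : z = u ∧ z' = v := by
  classical
  have hc := hT.isConnected
  have hzv : T.dist z v = T.dist z u + 1 := by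
    rcases dist_adj_cases hT huv z with h | h
    · exact h
    · omega
  have hz'u : T.dist z' u = T.dist z' v + 1 := by
    rcases dist_adj_cases hT huv z' with h | h
    · omega
    · exact h
  have e1 : T.dist z' u ≤ T.dist z u + 1 := by
    have h := hc.dist_triangle (u := z') (v := z) (w := u)
    rw [SimpleGraph.dist_eq_one_iff_adj.mpr hzz'.symm] at h
    omega
  have e2 : T.dist z v ≤ T.dist z' v + 1 := by
    have h := hc.dist_triangle (u := z) (v := z') (w := v)
    rw [SimpleGraph.dist_eq_one_iff_adj.mpr hzz'] at h
    omega
  have hcc : T.dist z u = T.dist z' v := by omega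
  rcases Nat.eq_zero_or_pos (T.dist z u) with h0 | hpos
  · exact ⟨(hc.dist_eq_zero_iff).mp (by omega), (hc.dist_eq_zero_iff).mp (by omega)⟩
  · exfalso
    obtain ⟨P, hP, hPl⟩ := exists_path_eq_dist hc u z
    obtain ⟨Q, hQ, hQl⟩ := exists_path_eq_dist hc v z'
    rw [SimpleGraph.dist_comm] at hPl hQl
    -- z' not in P
    have hz'P : z' ∉ P.support := by
      intro hmem
      have h1 : T.dist u z' ≤ (P.takeUntil z' hmem).length := SimpleGraph.dist_le _
      have h2 := SimpleGraph.Walk.length_takeUntil_le P hmem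
      rw [SimpleGraph.dist_comm] at h1
      omega
    have huQ : u ∉ Q.support := by
      intro hmem
      have h1 : T.dist u z' ≤ (Q.dropUntil u hmem).length := SimpleGraph.dist_le _
      have h2 := SimpleGraph.Walk.length_dropUntil_le Q hmem
      rw [SimpleGraph.dist_comm] at h1
      omega
    have hR1 : (P.concat hzz').IsPath := by
      rw [← SimpleGraph.Walk.isPath_reverse_iff, SimpleGraph.Walk.reverse_concat]
      exact hP.reverse.cons (by simpa [SimpleGraph.Walk.support_reverse] using hz'P)
    have hR2 : (SimpleGraph.Walk.cons huv Q).IsPath :=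
      (SimpleGraph.Walk.cons_isPath_iff _ _).mpr ⟨hQ, huQ⟩
    have huniq := hT.IsAcyclic.path_unique ⟨P.concat hzz', hR1⟩ ⟨SimpleGraph.Walk.cons huv Q, hR2⟩
    have hsup := congrArg SimpleGraph.Walk.support (congrArg Subtype.val huniq)
    rw [SimpleGraph.Walk.support_concat, SimpleGraph.Walk.support_cons] at hsup
    -- P.support = u :: p₂ :: t with p₂ = v
    have hPlen : P.support.length = T.dist z u + 1 := by
      rw [SimpleGraph.Walk.length_support, hPl]
    have hPtail : P.support.tail ≠ [] := by
      intro hnil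
      have := congrArg List.length (P.support_eq_cons)
      rw [hnil] at this
      simp only [List.length_cons, List.length_nil] at this
      omega
    obtain ⟨p₂, t, ht⟩ := List.exists_cons_of_ne_nil hPtail
    have hPsup : P.support = u :: p₂ :: t := by
      rw [P.support_eq_cons, ht]
    rw [hPsup, Q.support_eq_cons] at hsup
    simp only [List.concat_eq_append, List.cons_append, List.cons.injEq] at hsup
    have hp2v : p₂ = v := hsup.2.1
    have hvP : v ∈ P.support := by
      rw [hPsup, hp2v]
      simp
    have h1 : T.dist v z ≤ (P.dropUntil v hvP).length := SimpleGraph.dist_le _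
    have h2 := SimpleGraph.Walk.length_dropUntil_le P hvP
    rw [SimpleGraph.dist_comm] at h1
    omega

lemma gate (hT : T.IsTree) {u v : V} (huv : T.Adj u v) :
    ∀ (D : ℕ) (x y : V), T.dist x y = D → T.dist x u < T.dist x v → T.dist y v < T.dist y u →
      T.dist x y = T.dist x u + 1 + T.dist v y := by
  have hc := hT.isConnected
  intro D
  induction D using Nat.strong_induction_on with
  | _ D ih =>
    intro x y hD hx hy
    have hxy : x ≠ y := by
      intro h
      subst h
      omega
    have hDpos : 1 ≤ D := by
      have : T.dist x y ≠ 0 := by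
        rw [SimpleGraph.dist_ne_zero_iff_ne_and_reachable]
        exact ⟨hxy, hc.preconnected x y⟩
      omega
    obtain ⟨w, hw⟩ := hc.exists_walk_length_eq_dist x y
    cases w with
    | nil => exact absurd rfl hxy
    | @cons _ m _ hadj w' =>
      simp only [SimpleGraph.Walk.length_cons] at hw
      have hmy : T.dist m y = D - 1 := by
        have h1 : T.dist m y ≤ w'.length := SimpleGraph.dist_le _
        have h2 : T.dist x y ≤ T.dist x m + T.dist m y := hc.dist_triangle
        rw [SimpleGraph.dist_eq_one_iff_adj.mpr hadj] at h2
        omega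
      have hub : T.dist x y ≤ T.dist x u + 1 + T.dist v y := by
        have h1 : T.dist x y ≤ T.dist x u + T.dist u y := hc.dist_triangle
        have h2 : T.dist u y ≤ T.dist u v + T.dist v y := hc.dist_triangle
        rw [SimpleGraph.dist_eq_one_iff_adj.mpr huv] at h2
        omega
      by_cases hm : T.dist m u < T.dist m v
      · have hrec := ih (D - 1) (by omega) m y hmy hm hy
        rcases dist_adj_cases hT hadj u with h | h
        · rw [show T.dist u m = T.dist m u from SimpleGraph.dist_comm,
            show T.dist u x = T.dist x u from SimpleGraph.dist_comm] at h
          omega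
        · rw [show T.dist u m = T.dist m u from SimpleGraph.dist_comm,
            show T.dist u x = T.dist x u from SimpleGraph.dist_comm] at h
          omega
      · have hne := dist_ne_of_adj hT huv m
        have hm' : T.dist m v < T.dist m u := by omega
        obtain ⟨hxu, hmv⟩ := crossing hT huv hadj hx hm'
        have h1 : T.dist x u = 0 := by rw [hxu]; simp
        have h2 : T.dist v y = D - 1 := by rw [← hmv]; exact hmy
        omega

lemma exists_farther_neighbor (hT : T.IsTree) {z : V}
    (hz : ∃ a b, T.Adj z a ∧ T.Adj z b ∧ a ≠ b) (u : V) :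
    ∃ z', T.Adj z z' ∧ T.dist u z' = T.dist u z + 1 := by
  classical
  have hc := hT.isConnected
  obtain ⟨a, b, hza, hzb, hab⟩ := hz
  rcases dist_adj_cases hT hza u with h | h
  · exact ⟨a, hza, h⟩
  rcases dist_adj_cases hT hzb u with h' | h'
  · exact ⟨b, hzb, h'⟩
  exfalso
  -- both a and b strictly closer to u than z : two distinct paths u → z
  obtain ⟨Pa, hPa, hPal⟩ := exists_path_eq_dist hc u a
  obtain ⟨Pb, hPb, hPbl⟩ := exists_path_eq_dist hc u b
  have hzPa : z ∉ Pa.support := by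
    intro hmem
    have h1 : T.dist u z ≤ (Pa.takeUntil z hmem).length := SimpleGraph.dist_le _
    have h2 := SimpleGraph.Walk.length_takeUntil_le Pa hmem
    omega
  have hzPb : z ∉ Pb.support := by
    intro hmem
    have h1 : T.dist u z ≤ (Pb.takeUntil z hmem).length := SimpleGraph.dist_le _
    have h2 := SimpleGraph.Walk.length_takeUntil_le Pb hmem
    omega
  have hRa : (Pa.concat hza.symm).IsPath := by
    rw [← SimpleGraph.Walk.isPath_reverse_iff, SimpleGraph.Walk.reverse_concat]
    exact hPa.reverse.cons (by simpa [SimpleGraph.Walk.support_reverse] using hzPa)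
  have hRb : (Pb.concat hzb.symm).IsPath := by
    rw [← SimpleGraph.Walk.isPath_reverse_iff, SimpleGraph.Walk.reverse_concat]
    exact hPb.reverse.cons (by simpa [SimpleGraph.Walk.support_reverse] using hzPb)
  have huniq := hT.IsAcyclic.path_unique ⟨Pa.concat hza.symm, hRa⟩ ⟨Pb.concat hzb.symm, hRb⟩
  have hsup := congrArg SimpleGraph.Walk.support (congrArg Subtype.val huniq)
  rw [SimpleGraph.Walk.support_concat, SimpleGraph.Walk.support_concat] at hsup
  have hsup' : Pa.support = Pb.support := by
    have h1 := congrArg List.dropLast hsup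
    simpa [List.concat_eq_append] using h1
  -- compare last elements via reversed walks
  have hhead := congrArg (fun l => l.reverse) hsup'
  rw [← SimpleGraph.Walk.support_reverse, ← SimpleGraph.Walk.support_reverse] at hhead
  rw [Pa.reverse.support_eq_cons, Pb.reverse.support_eq_cons] at hhead
  exact hab (List.head_eq_of_cons_eq hhead)

lemma chain (hT : T.IsTree) {u v : V} (huv : T.Adj u v)
    (hNL : ∀ z : V, ∃ a b, T.Adj z a ∧ T.Adj z b ∧ a ≠ b) :
    ∀ n : ℕ, ∃ z : V, T.dist u z = n + 1 ∧ T.dist v z = n := by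
  have hc := hT.isConnected
  intro n
  induction n with
  | zero => exact ⟨v, SimpleGraph.dist_eq_one_iff_adj.mpr huv, by simp⟩
  | succ n ih =>
    obtain ⟨z, hz1, hz2⟩ := ih
    obtain ⟨z', hadj, hz'⟩ := exists_farther_neighbor hT (hNL z) u
    refine ⟨z', by omega, ?_⟩
    have h1 : T.dist v z' ≤ T.dist v z + T.dist z z' := hc.dist_triangle
    rw [SimpleGraph.dist_eq_one_iff_adj.mpr hadj] at h1
    have h2 : T.dist u z' ≤ T.dist u v + T.dist v z' := hc.dist_triangle
    rw [SimpleGraph.dist_eq_one_iff_adj.mpr huv] at h2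
    omega

lemma interior_mem {a b : V} (p : T.Walk a b) :
    p.IsPath → ∀ w ∈ p.support, w = a ∨ w = b ∨ ∃ s t, T.Adj w s ∧ T.Adj w t ∧ s ≠ t := by
  induction p with
  | nil =>
    intro _ w hw
    rw [SimpleGraph.Walk.support_nil, List.mem_singleton] at hw
    exact Or.inl hw
  | @cons x y c hxy p' ih =>
    intro hp w hw
    rw [SimpleGraph.Walk.support_cons, List.mem_cons] at hw
    rcases hw with rfl | hw
    · exact Or.inl rfl
    have hp' : p'.IsPath := ((SimpleGraph.Walk.cons_isPath_iff _ _).mp hp).1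
    rcases ih hp' w hw with rfl | h | h
    · -- w = y
      cases p' with
      | nil => exact Or.inr (Or.inl rfl)
      | @cons _ z _ hyz p'' =>
        refine Or.inr (Or.inr ⟨x, z, hxy.symm, hyz, ?_⟩)
        intro hxz
        have hnx := ((SimpleGraph.Walk.cons_isPath_iff _ _).mp hp).2
        apply hnx
        rw [SimpleGraph.Walk.support_cons, hxz]
        exact List.mem_cons_of_mem _ (SimpleGraph.Walk.start_mem_support p'')
    · exact Or.inr (Or.inl h)
    · exact Or.inr (Or.inr h)

lemma walk_mem_pair {u v : V} (hsub : ∀ z a b, T.Adj z a → T.Adj z b → a = b)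
    (huv : T.Adj u v) : ∀ {x : V} (_ : T.Walk x u), x = u ∨ x = v
  | _, SimpleGraph.Walk.nil => Or.inl rfl
  | x, SimpleGraph.Walk.cons h w' => by
    rcases walk_mem_pair hsub huv w' with h1 | h1
    · subst h1
      exact Or.inr (hsub _ _ _ h.symm huv)
    · subst h1
      exact Or.inl (hsub _ _ _ h.symm huv.symm)

section KClosure

variable {G : Subgroup (Equiv.Perm V)}

lemma kClosure_anti {S : Set (Equiv.Perm V)} {k r : ℕ} (hkr : k ≤ r) :
    kClosure T S r ⊆ kClosure T S k := fun h hh =>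
  ⟨hh.1, fun x => by
    obtain ⟨g, hg, hloc⟩ := hh.2 x
    exact ⟨g, hg, fun v hv => hloc v (le_trans hv hkr)⟩⟩

lemma subgroup_subset_kClosure (hG : ∀ g ∈ G, IsTreeAut T g) (k : ℕ) :
    (G : Set (Equiv.Perm V)) ⊆ kClosure T (G : Set (Equiv.Perm V)) k :=
  fun g hg => ⟨hG g hg, fun _ => ⟨g, hg, fun _ _ => rfl⟩⟩

def kClosureSubgroup (hc : T.Connected) (hG : ∀ g ∈ G, IsTreeAut T g) (k : ℕ) :
    Subgroup (Equiv.Perm V) where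
  carrier := kClosure T (G : Set (Equiv.Perm V)) k
  one_mem' := ⟨isTreeAut_one, fun _ => ⟨1, G.one_mem, fun _ _ => rfl⟩⟩
  mul_mem' := by
    rintro a b ⟨ha1, ha2⟩ ⟨hb1, hb2⟩
    refine ⟨treeAut_mul ha1 hb1, fun x => ?_⟩
    obtain ⟨g2, hg2, h2⟩ := hb2 x
    obtain ⟨g1, hg1, h1⟩ := ha2 (b x)
    refine ⟨g1 * g2, mul_mem hg1 hg2, fun v hv => ?_⟩
    have hd : T.dist (b x) (b v) ≤ k := by
      rw [treeAut_dist hc hb1]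
      exact hv
    calc (a * b) v = a (b v) := rfl
    _ = g1 (b v) := h1 (b v) hd
    _ = g1 (g2 v) := by rw [h2 v hv]
    _ = (g1 * g2) v := rfl
  inv_mem' := by
    rintro a ⟨ha1, ha2⟩
    refine ⟨treeAut_inv ha1, fun x => ?_⟩
    obtain ⟨g, hg, hloc⟩ := ha2 (a⁻¹ x)
    refine ⟨g⁻¹, inv_mem hg, fun v hv => ?_⟩
    have hd : T.dist (a⁻¹ x) (a⁻¹ v) ≤ k := by
      rw [treeAut_dist hc (treeAut_inv ha1)]
      exact hv
    have h1 := hloc (a⁻¹ v) hd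
    rw [Equiv.Perm.apply_inv_self] at h1
    apply Equiv.injective g
    rw [Equiv.Perm.apply_inv_self]
    exact h1.symm

@[simp] lemma mem_kClosureSubgroup (hc : T.Connected) (hG : ∀ g ∈ G, IsTreeAut T g) (k : ℕ)
    (h : Equiv.Perm V) :
    h ∈ kClosureSubgroup hc hG k ↔ h ∈ kClosure T (G : Set (Equiv.Perm V)) k := Iff.rfl

lemma mem_kClosure_of_witness (hc : T.Connected) (hG : ∀ g ∈ G, IsTreeAut T g) {k : ℕ}
    (hk : 1 ≤ k) (h : Equiv.Perm V)
    (hw : ∀ x : V, ∃ g ∈ G, ∀ v : V, T.dist x v ≤ k → h v = g v) :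
    h ∈ kClosure T (G : Set (Equiv.Perm V)) k := by
  refine ⟨fun a b => ?_, fun x => hw x⟩
  obtain ⟨g, hg, hloc⟩ := hw a
  have hga : h a = g a := hloc a (by rw [SimpleGraph.dist_self]; omega)
  constructor
  · intro hab
    have h1 : T.dist (g a) (h b) ≤ k := by
      have : T.dist (g a) (h b) = 1 := SimpleGraph.dist_eq_one_iff_adj.mpr (hga ▸ hab)
      omega
    have h2 : T.dist a (g⁻¹ (h b)) ≤ k := by
      have hiso := treeAut_dist hc (treeAut_inv (hG g hg)) (g a) (h b)
      rw [Equiv.Perm.inv_apply_self] at hiso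
      omega
    have h3 := hloc _ h2
    rw [Equiv.Perm.apply_inv_self] at h3
    have h5 : g⁻¹ (h b) = b := h.injective h3
    have hgb : h b = g b := by
      conv_lhs => rw [← Equiv.Perm.apply_inv_self g (h b), h5]
    exact (hG g hg a b).mp (by rwa [hga, hgb] at hab)
  · intro hab
    have hgb : h b = g b :=
      hloc b (by rw [SimpleGraph.dist_eq_one_iff_adj.mpr hab]; omega)
    rw [hga, hgb]
    exact (hG g hg a b).mpr hab

end KClosure

lemma hybrid_perm (g : Equiv.Perm V) (A : Set V) (hA : ∀ z, z ∈ A ↔ g z ∈ A) :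
    ∃ g₁ : Equiv.Perm V, (∀ z ∈ A, g₁ z = g z) ∧ (∀ z ∉ A, g₁ z = z) := by
  classical
  refine ⟨⟨fun z => if z ∈ A then g z else z, fun z => if z ∈ A then g⁻¹ z else z, ?_, ?_⟩,
    fun z hz => if_pos hz, fun z hz => if_neg hz⟩
  · intro z
    by_cases hz : z ∈ A
    · simp only [hz, if_true, (hA z).mp hz, Equiv.Perm.inv_apply_self]
    · simp only [hz, if_false]
  · intro z
    by_cases hz : z ∈ A
    · have : g⁻¹ z ∈ A := by
        rw [hA (g⁻¹ z), Equiv.Perm.apply_inv_self]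
        exact hz
      simp only [hz, if_true, this, Equiv.Perm.apply_inv_self]
    · have : g⁻¹ z ∉ A := by
        rw [hA (g⁻¹ z), Equiv.Perm.apply_inv_self]
        exact hz
      simp only [hz, if_false]

end Aux

theorem plus_subgroups_of_kClosures {V : Type*} [Countable V]
    (T : SimpleGraph V) (hT : T.IsTree) (hline : NotLine T)
    (G : Subgroup (Equiv.Perm V)) (hG : ∀ g ∈ G, IsTreeAut T g)
    (hgd : GeomDense T (G : Set (Equiv.Perm V)))
    (k r : ℕ) (hk : 1 ≤ k) (hkr : k ≤ r) :
    plusSubgroup T (kClosure T (G : Set (Equiv.Perm V)) r) r ≤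
      plusSubgroup T (kClosure T (G : Set (Equiv.Perm V)) k) k ∧
    (plusSubgroup T (kClosure T (G : Set (Equiv.Perm V)) r) r =
        plusSubgroup T (kClosure T (G : Set (Equiv.Perm V)) k) k ↔
      kClosure T (G : Set (Equiv.Perm V)) r = kClosure T (G : Set (Equiv.Perm V)) k) := by
  classical
  have hc : T.Connected := hT.isConnected
  have part1 : plusSubgroup T (kClosure T (G : Set (Equiv.Perm V)) r) r ≤
      plusSubgroup T (kClosure T (G : Set (Equiv.Perm V)) k) k := by
    refine (Subgroup.closure_le _).mpr ?_
    rintro g ⟨hgS, u, v, huv, hfix⟩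
    refine Subgroup.subset_closure ⟨Aux.kClosure_anti hkr hgS, u, v, huv, fun w hw => ?_⟩
    obtain ⟨c, hcuv, hdc⟩ := hw
    exact hfix w ⟨c, hcuv, le_trans hdc (by omega)⟩
  refine ⟨part1, ?_, ?_⟩
  · -- equality of plus subgroups implies equality of closures
    intro hP
    apply Set.Subset.antisymm (Aux.kClosure_anti hkr)
    intro h hh
    by_cases htriv : ∀ a b : V, a = b
    · exact ⟨hh.1, fun x => ⟨1, G.one_mem, fun v _ => htriv (h v) v⟩⟩
    · push_neg at htriv
      obtain ⟨a0, b0, hab0⟩ := htriv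
      obtain ⟨x₀, y₀, hxy⟩ : ∃ x y : V, T.Adj x y := by
        obtain ⟨w⟩ := hc.preconnected a0 b0
        cases w with
        | nil => exact absurd rfl hab0
        | cons hadj _ => exact ⟨_, _, hadj⟩
      obtain ⟨g, hgG, hgloc⟩ := hh.2 x₀
      have hgG' : g ∈ G := hgG
      have hgr : g ∈ Aux.kClosureSubgroup hc hG r := Aux.subgroup_subset_kClosure hG r hgG
      have hgk : g ∈ Aux.kClosureSubgroup hc hG k := Aux.subgroup_subset_kClosure hG k hgG
      have hhk : h ∈ Aux.kClosureSubgroup hc hG k := hh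
      have hb'k : g⁻¹ * h ∈ Aux.kClosureSubgroup hc hG k := mul_mem (inv_mem hgk) hhk
      have hb'fix : ∀ w ∈ nbhd T ({x₀, y₀} : Set V) (k - 1), (g⁻¹ * h) w = w := by
        rintro w ⟨c, hcmem, hdc⟩
        simp only [Set.mem_insert_iff, Set.mem_singleton_iff] at hcmem
        have hdist : T.dist x₀ w ≤ k := by
          have hcw : T.dist w c = T.dist c w := SimpleGraph.dist_comm
          rcases hcmem with h' | h'
          · subst h'
            omega
          · subst h'
            have h1 : T.dist x₀ w ≤ T.dist x₀ c + T.dist c w := hc.dist_triangle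
            rw [SimpleGraph.dist_eq_one_iff_adj.mpr hxy] at h1
            omega
        show g⁻¹ (h w) = w
        rw [hgloc w hdist, Equiv.Perm.inv_apply_self]
      have hb'gen : g⁻¹ * h ∈ plusSubgroup T (kClosure T (G : Set (Equiv.Perm V)) k) k :=
        Subgroup.subset_closure ⟨hb'k, x₀, y₀, hxy, hb'fix⟩
      have hb'r : g⁻¹ * h ∈ plusSubgroup T (kClosure T (G : Set (Equiv.Perm V)) r) r := by
        rw [hP]; exact hb'gen
      have hPr_le : plusSubgroup T (kClosure T (G : Set (Equiv.Perm V)) r) r ≤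
          Aux.kClosureSubgroup hc hG r :=
        (Subgroup.closure_le _).mpr (fun g' hg' => hg'.1)
      have hfin : h ∈ Aux.kClosureSubgroup hc hG r := by
        have := mul_mem hgr (hPr_le hb'r)
        rwa [mul_inv_cancel_left] at this
      exact hfin
  · -- equality of closures implies equality of plus subgroups
    intro hS
    refine le_antisymm part1 ?_
    refine (Subgroup.closure_le _).mpr ?_
    rintro g₀ ⟨hg₀S, u, v, huv, hfix⟩
    have hg₀mem : g₀ ∈ kClosure T (G : Set (Equiv.Perm V)) k := hg₀S
    have hg₀u : g₀ u = u := hfix u ⟨u, Set.mem_insert _ _, by rw [SimpleGraph.dist_self]; omega⟩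
    have hg₀v : g₀ v = v :=
      hfix v ⟨v, Set.mem_insert_of_mem _ rfl, by rw [SimpleGraph.dist_self]; omega⟩
    by_cases hNLex : ∃ z a b : V, T.Adj z a ∧ T.Adj z b ∧ a ≠ b
    case neg =>
      push_neg at hNLex
      have hg₀1 : g₀ = 1 := by
        apply Equiv.ext
        intro x
        rcases (hc.preconnected x u).elim
            (fun w => Aux.walk_mem_pair (fun z a b hza hzb => hNLex z a b hza hzb) huv w)
            with rfl | rfl
        · exact hg₀u
        · exact hg₀v
      rw [hg₀1]
      exact SetLike.mem_coe.mpr (one_mem _)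
    case pos =>
      obtain ⟨z₀, a₀, b₀, hz₀⟩ := hNLex
      have hNL : ∀ z : V, ∃ a b, T.Adj z a ∧ T.Adj z b ∧ a ≠ b := by
        by_contra hex
        push_neg at hex
        obtain ⟨l, hl⟩ := hex
        refine hgd.2 ⟨{z : V | ∃ a b, T.Adj z a ∧ T.Adj z b ∧ a ≠ b}, ⟨z₀, a₀, b₀, hz₀⟩,
          ?_, ?_, ?_⟩
        · intro a ha b hb p hp w hw
          rcases Aux.interior_mem p hp w hw with rfl | rfl | hmem
          exacts [ha, hb, hmem]
        · intro hY
          have hlY : l ∈ {z : V | ∃ a b, T.Adj z a ∧ T.Adj z b ∧ a ≠ b} := by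
            rw [hY]; exact Set.mem_univ l
          obtain ⟨a, b, h1, h2, h3⟩ := hlY
          exact h3 (hl a b h1 h2)
        · rintro g hgG w ⟨a, b, h1, h2, h3⟩
          exact ⟨g a, g b, (hG g hgG w a).mpr h1, (hG g hgG w b).mpr h2,
            fun he => h3 (g.injective he)⟩
      have hg₀aut : IsTreeAut T g₀ := hg₀mem.1
      have hiso := Aux.treeAut_dist hc hg₀aut
      set A : Set V := {z | T.dist z u < T.dist z v} with hA
      have hAinv : ∀ z, z ∈ A ↔ g₀ z ∈ A := by
        intro z
        have h1 : T.dist (g₀ z) u = T.dist z u := by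
          conv_lhs => rw [← hg₀u]
          exact hiso z u
        have h2 : T.dist (g₀ z) v = T.dist z v := by
          conv_lhs => rw [← hg₀v]
          exact hiso z v
        simp only [hA, Set.mem_setOf_eq, h1, h2]
      obtain ⟨g₁, hg₁A, hg₁nA⟩ := Aux.hybrid_perm g₀ A hAinv
      have hstrict : ∀ z : V, z ∉ A → T.dist z v < T.dist z u := by
        intro z hz
        have hne := Aux.dist_ne_of_adj hT huv z
        simp only [hA, Set.mem_setOf_eq, not_lt] at hz
        omega
      have hfix_of_A_notA : ∀ x ∈ A, ∀ w, w ∉ A → T.dist x w ≤ k → g₀ w = w := by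
        intro x hx w hw hdist
        have hg := Aux.gate hT huv (T.dist x w) x w rfl hx (hstrict w hw)
        refine hfix w ⟨v, Set.mem_insert_of_mem _ rfl, ?_⟩
        have : T.dist w v = T.dist v w := SimpleGraph.dist_comm
        omega
      have hfix_of_notA : ∀ x, x ∉ A → ∀ w ∈ A, T.dist x w ≤ k → g₀ w = w := by
        intro x hx w hw hdist
        have hg := Aux.gate hT huv (T.dist w x) w x rfl hw (hstrict x hx)
        have hcomm : T.dist w x = T.dist x w := SimpleGraph.dist_comm
        exact hfix w ⟨u, Set.mem_insert _ _, by omega⟩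
      have hg₁k : g₁ ∈ kClosure T (G : Set (Equiv.Perm V)) k := by
        apply Aux.mem_kClosure_of_witness hc hG hk
        intro x
        by_cases hx : x ∈ A
        · obtain ⟨a, haG, haloc⟩ := hg₀mem.2 x
          refine ⟨a, haG, fun w hdw => ?_⟩
          by_cases hwA : w ∈ A
          · rw [hg₁A w hwA]; exact haloc w hdw
          · rw [hg₁nA w hwA, ← haloc w hdw]
            exact (hfix_of_A_notA x hx w hwA hdw).symm
        · refine ⟨1, G.one_mem, fun w hdw => ?_⟩
          by_cases hwA : w ∈ A
          · rw [hg₁A w hwA]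
            exact hfix_of_notA x hx w hwA hdw
          · rw [hg₁nA w hwA]; rfl
      have hg₂A : ∀ z ∈ A, (g₁⁻¹ * g₀) z = z := by
        intro z hz
        show g₁⁻¹ (g₀ z) = z
        rw [← hg₁A z hz, Equiv.Perm.inv_apply_self]
      have hg₂nA : ∀ z ∉ A, (g₁⁻¹ * g₀) z = g₀ z := by
        intro z hz
        show g₁⁻¹ (g₀ z) = g₀ z
        have hz' : g₀ z ∉ A := fun hmem => hz ((hAinv z).mpr hmem)
        have heq : g₁ (g₀ z) = g₀ z := hg₁nA _ hz'
        conv_lhs => rw [← heq, Equiv.Perm.inv_apply_self]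
      have hg₂k : g₁⁻¹ * g₀ ∈ Aux.kClosureSubgroup hc hG k := by
        have h1 : g₁ ∈ Aux.kClosureSubgroup hc hG k := hg₁k
        have h2 : g₀ ∈ Aux.kClosureSubgroup hc hG k := hg₀mem
        exact mul_mem (inv_mem h1) h2
      -- deep edge on the non-A side
      obtain ⟨q, hq1, hq2⟩ := Aux.chain hT huv hNL r
      obtain ⟨q', hqq', hq'⟩ := Aux.exists_farther_neighbor hT (hNL q) u
      have hq'v : T.dist v q' = r + 1 := by
        have h1 : T.dist v q' ≤ T.dist v q + T.dist q q' := hc.dist_triangle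
        rw [SimpleGraph.dist_eq_one_iff_adj.mpr hqq'] at h1
        have h2 : T.dist u q' ≤ T.dist u v + T.dist v q' := hc.dist_triangle
        rw [SimpleGraph.dist_eq_one_iff_adj.mpr huv] at h2
        omega
      have hqB : T.dist q v < T.dist q u := by
        have c1 : T.dist q v = T.dist v q := SimpleGraph.dist_comm
        have c2 : T.dist q u = T.dist u q := SimpleGraph.dist_comm
        omega
      have hq'B : T.dist q' v < T.dist q' u := by
        have c1 : T.dist q' v = T.dist v q' := SimpleGraph.dist_comm
        have c2 : T.dist q' u = T.dist u q' := SimpleGraph.dist_comm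
        omega
      have hg₁fix : ∀ w ∈ nbhd T ({q, q'} : Set V) (r - 1), g₁ w = w := by
        rintro w ⟨c, hcmem, hdc⟩
        simp only [Set.mem_insert_iff, Set.mem_singleton_iff] at hcmem
        have hwA : w ∉ A := by
          intro hwA
          rcases hcmem with h' | h'
          · subst h'
            have hg := Aux.gate hT huv (T.dist w c) w c rfl hwA hqB
            omega
          · subst h'
            have hg := Aux.gate hT huv (T.dist w c) w c rfl hwA hq'B
            omega
        exact hg₁nA w hwA
      -- deep edge on the A side
      obtain ⟨p, hp1, hp2⟩ := Aux.chain hT huv.symm hNL r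
      obtain ⟨p', hpp', hp'⟩ := Aux.exists_farther_neighbor hT (hNL p) v
      have hp'u : T.dist u p' = r + 1 := by
        have h1 : T.dist u p' ≤ T.dist u p + T.dist p p' := hc.dist_triangle
        rw [SimpleGraph.dist_eq_one_iff_adj.mpr hpp'] at h1
        have h2 : T.dist v p' ≤ T.dist v u + T.dist u p' := hc.dist_triangle
        rw [SimpleGraph.dist_eq_one_iff_adj.mpr huv.symm] at h2
        omega
      have hpA : p ∈ A := by
        have c1 : T.dist p v = T.dist v p := SimpleGraph.dist_comm
        have c2 : T.dist p u = T.dist u p := SimpleGraph.dist_comm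
        simp only [hA, Set.mem_setOf_eq]
        omega
      have hp'A : p' ∈ A := by
        have c1 : T.dist p' v = T.dist v p' := SimpleGraph.dist_comm
        have c2 : T.dist p' u = T.dist u p' := SimpleGraph.dist_comm
        simp only [hA, Set.mem_setOf_eq]
        omega
      have hg₂fix : ∀ w ∈ nbhd T ({p, p'} : Set V) (r - 1), (g₁⁻¹ * g₀) w = w := by
        rintro w ⟨c, hcmem, hdc⟩
        simp only [Set.mem_insert_iff, Set.mem_singleton_iff] at hcmem
        have hwA : w ∈ A := by
          by_contra hwA'
          have hws := hstrict w hwA'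
          rcases hcmem with h' | h'
          · subst h'
            have hcA : T.dist c u < T.dist c v := hpA
            have hg := Aux.gate hT huv.symm (T.dist w c) w c rfl hws hcA
            omega
          · subst h'
            have hcA : T.dist c u < T.dist c v := hp'A
            have hg := Aux.gate hT huv.symm (T.dist w c) w c rfl hws hcA
            omega
        exact hg₂A w hwA
      have hg₁gen : g₁ ∈ plusSubgroup T (kClosure T (G : Set (Equiv.Perm V)) r) r :=
        Subgroup.subset_closure ⟨by rw [hS]; exact hg₁k, q, q', hqq', hg₁fix⟩
      have hg₂gen : g₁⁻¹ * g₀ ∈ plusSubgroup T (kClosure T (G : Set (Equiv.Perm V)) r) r :=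
        Subgroup.subset_closure ⟨by rw [hS]; exact hg₂k, p, p', hpp', hg₂fix⟩
      have hsplit : g₀ = g₁ * (g₁⁻¹ * g₀) := (mul_inv_cancel_left g₁ g₀).symm
      rw [hsplit]
      exact SetLike.mem_coe.mpr (mul_mem hg₁gen hg₂gen)
end
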